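/- Let A be a C*-algebra and D ⊆ A an abelian closed *-subalgebra containing an approximate unit for A, and let n be a normaliser of D in A. Then n* is a normaliser of D in A and α_{n*} : supp°(nn*) → supp°(n*n) equals the inverse of the homeomorphism α_n. -/

import Mathlib

open WeakDual Filter Topology Classical

variable {A : Type} [NonUnitalNormedRing A] [StarRing A] [CStarRing A]
  [NormedSpace ℂ A] [IsScalarTower ℂ A A] [SMulCommClass ℂ A A] [CompleteSpace A] [StarModule ℂ A]

/-- Evaluation of a character of `D` at an element of `A` (taken to be `0` off `D`). -/
noncomputable def evalD (D : NonUnitalStarSubalgebra ℂ A) (φ : characterSpace ℂ D) (a : A) : ℂ :=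
  if h : a ∈ D then φ (⟨a, h⟩ : D) else 0

/-- The open support `supp°(a) = {φ ∈ D̂ : φ(a) ≠ 0}`. -/
def suppo (D : NonUnitalStarSubalgebra ℂ A) (a : A) : Set (characterSpace ℂ D) :=
  {φ | evalD D φ a ≠ 0}

/-- `n` is a normaliser of `D` in `A`. -/
def IsNormalizer (D : NonUnitalStarSubalgebra ℂ A) (n : A) : Prop :=
  ∀ d ∈ D, n * d * star n ∈ D ∧ star n * d * n ∈ D

/-- `S` contains an approximate unit for `A`: there is a net in `S` converging
multiplicatively to the identity on every element of `A`. -/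
def HasApproxUnit (S : Set A) : Prop :=
  ∃ (ι : Type) (l : Filter ι) (e : ι → A), l.NeBot ∧ (∀ i, e i ∈ S) ∧
    ∀ a : A, Tendsto (fun i => e i * a) l (nhds a) ∧ Tendsto (fun i => a * e i) l (nhds a)

/-- `α` is "the" homeomorphism `α_n : supp°(n*n) → supp°(nn*)` attached to a normaliser `n`,
i.e. a partial homeomorphism of `D̂` with source `supp°(n*n)`, target `supp°(nn*)`, and
satisfying `φ(n*n)·(α_n φ)(d) = φ(n* d n)` for all `φ` in the source and `d ∈ D`. -/
def IsWeylHomeo (D : NonUnitalStarSubalgebra ℂ A) (n : A)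
    (α : PartialHomeomorph (characterSpace ℂ D) (characterSpace ℂ D)) : Prop :=
  α.source = suppo D (star n * n) ∧ α.target = suppo D (n * star n) ∧
  ∀ φ ∈ α.source, ∀ d ∈ D, evalD D φ (star n * n) * evalD D (α φ) d = evalD D φ (star n * d * n)

/-- The relative commutant `D' = {a ∈ A : a d = d a for all d ∈ D}`, as a set. -/
def commutantSet (D : NonUnitalStarSubalgebra ℂ A) : Set A := {a | ∀ d ∈ D, a * d = d * a}

/-- The ideal `J_φ ⊆ D'`: the closure of `(ker φ)·D'`. -/
noncomputable def Jset (D : NonUnitalStarSubalgebra ℂ A) (φ : characterSpace ℂ D) : Set A :=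
  closure ((Submodule.span ℂ {x : A | ∃ k ∈ (D : Set A), ∃ a ∈ commutantSet D,
    evalD D φ k = 0 ∧ x = k * a} : Submodule ℂ A) : Set A)

/-- `e ∈ D'` represents the unit of `D'/J_φ`. -/
def IsUnitModJ (D : NonUnitalStarSubalgebra ℂ A) (φ : characterSpace ℂ D) (e : A) : Prop :=
  e ∈ commutantSet D ∧ ∀ a ∈ commutantSet D, e * a - a ∈ Jset D φ ∧ a * e - a ∈ Jset D φ

/-- `D` is a weakly Cartan subalgebra of `A`. -/
def IsWeaklyCartan (D : NonUnitalStarSubalgebra ℂ A) : Prop :=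
  IsClosed (D : Set A) ∧ (∀ x ∈ D, ∀ y ∈ D, x * y = y * x) ∧ HasApproxUnit (D : Set A) ∧
  (∀ φ : characterSpace ℂ D, ∃ e, IsUnitModJ D φ e) ∧
  (∀ φ : characterSpace ℂ D, ∃ d ∈ D, ∃ U : Set (characterSpace ℂ D),
    IsOpen U ∧ φ ∈ U ∧ ∀ ψ ∈ U, IsUnitModJ D ψ d)

/-- The relative commutant `D'` as a non-unital star subalgebra of `A`. -/
def commutantAlg (D : NonUnitalStarSubalgebra ℂ A) : NonUnitalStarSubalgebra ℂ A where
  carrier := commutantSet D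
  add_mem' := by
    intro a b ha hb d hd
    simp only [commutantSet, Set.mem_setOf_eq] at *
    rw [add_mul, mul_add, ha d hd, hb d hd]
  zero_mem' := by
    intro d _
    rw [zero_mul, mul_zero]
  mul_mem' := by
    intro a b ha hb d hd
    calc a * b * d = a * (b * d) := by rw [mul_assoc]
      _ = a * (d * b) := by rw [hb d hd]
      _ = a * d * b := by rw [mul_assoc]
      _ = d * a * b := by rw [ha d hd]
      _ = d * (a * b) := by rw [mul_assoc]
  smul_mem' := by
    intro c a ha d hd
    rw [smul_mul_assoc, ha d hd, mul_smul_comm]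
  star_mem' := by
    intro a ha d hd
    calc star a * d = star (star d * a) := by rw [star_mul, star_star]
      _ = star (a * star d) := by rw [← ha (star d) (star_mem hd)]
      _ = d * star a := by rw [star_mul, star_star]

/-- `w` is a representative in `A` of the unitary `U^φ_{n*m}` of `D'/J_φ`:
`w = φ(m*m)^{-1/2}·φ(n*n)^{-1/2}·(d n* m d)` for some admissible `U` and `d`. -/
noncomputable def WeylRep (D : NonUnitalStarSubalgebra ℂ A) (n m : A)
    (φ : characterSpace ℂ D) (w : A) : Prop :=
  ∃ U : Set (characterSpace ℂ D), IsOpen U ∧ φ ∈ U ∧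
    U ⊆ suppo D (star n * n) ∩ suppo D (star m * m) ∧
    (∃ αn αm : PartialHomeomorph (characterSpace ℂ D) (characterSpace ℂ D),
       IsWeylHomeo D n αn ∧ IsWeylHomeo D m αm ∧ Set.EqOn ⇑αn ⇑αm U) ∧
    ∃ d ∈ (D : Set A), suppo D d ⊆ U ∧ evalD D φ d = 1 ∧
      w = (evalD D φ (star m * m) ^ (-(1/2) : ℂ) * evalD D φ (star n * n) ^ (-(1/2) : ℂ)) •
        (d * (star n * m) * d)

/-- The unitary `U^φ_{n*m}` of `D'/J_φ` lies in the connected component of the identity of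
the unitary group of `D'/J_φ`; the quotient `D'/J_φ` is represented by an arbitrary
surjective star-homomorphism `π` from `D'` onto a unital C*-algebra `Q` with kernel `J_φ`. -/
noncomputable def InU0 (D : NonUnitalStarSubalgebra ℂ A) (n m : A)
    (φ : characterSpace ℂ D) : Prop :=
  ∀ (Q : Type) [NormedRing Q] [StarRing Q] [CStarRing Q] [NormedAlgebra ℂ Q]
    [CompleteSpace Q] [StarModule ℂ Q] (π : commutantAlg D →⋆ₙₐ[ℂ] Q),
    Function.Surjective ⇑π →
    (∀ a : commutantAlg D, π a = 0 ↔ (a : A) ∈ Jset D φ) →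
    ∃ w : commutantAlg D, WeylRep D n m φ (w : A) ∧
      ∃ hu : π w ∈ unitary Q, (⟨π w, hu⟩ : unitary Q) ∈ connectedComponent (1 : unitary Q)

/-- The relation `(n, φ) ∼ (m, ψ)` of Lemma 4.7 (for the trivial coaction). -/
noncomputable def WeylSimRaw (D : NonUnitalStarSubalgebra ℂ A) (n : A)
    (φ : characterSpace ℂ D) (m : A) (ψ : characterSpace ℂ D) : Prop :=
  φ = ψ ∧
  (∃ U : Set (characterSpace ℂ D), IsOpen U ∧ φ ∈ U ∧
    U ⊆ suppo D (star n * n) ∩ suppo D (star m * m) ∧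
    ∃ αn αm : PartialHomeomorph (characterSpace ℂ D) (characterSpace ℂ D),
      IsWeylHomeo D n αn ∧ IsWeylHomeo D m αm ∧ Set.EqOn ⇑αn ⇑αm U) ∧
  InU0 D n m φ

/-- The set of pairs `(n, φ)` with `n ∈ N(D)` and `φ ∈ supp°(n*n)`. -/
def WeylPair (D : NonUnitalStarSubalgebra ℂ A) : Type :=
  {p : A × characterSpace ℂ D // IsNormalizer D p.1 ∧ p.2 ∈ suppo D (star p.1 * p.1)}

lemma evalD_mul' (D : NonUnitalStarSubalgebra ℂ A) (φ : characterSpace ℂ D)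
    {x y : A} (hx : x ∈ D) (hy : y ∈ D) :
    evalD D φ (x * y) = evalD D φ x * evalD D φ y := by
  rw [evalD, evalD, evalD, dif_pos hx, dif_pos hy, dif_pos (mul_mem hx hy)]
  have : (⟨x * y, mul_mem hx hy⟩ : D) = ⟨x, hx⟩ * ⟨y, hy⟩ := rfl
  rw [this, map_mul]

lemma char_ext' (D : NonUnitalStarSubalgebra ℂ A) (φ ψ : characterSpace ℂ D)
    (h : ∀ d ∈ D, evalD D φ d = evalD D ψ d) : φ = ψ := by
  apply Subtype.ext
  apply ContinuousLinearMap.ext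
  intro x
  have := h x x.2
  rw [evalD, evalD, dif_pos x.2, dif_pos x.2] at this
  exact this

theorem statement_4
    (D : NonUnitalStarSubalgebra ℂ A) (hDclosed : IsClosed (D : Set A))
    (hDabelian : ∀ x ∈ D, ∀ y ∈ D, x * y = y * x)
    (hDapprox : HasApproxUnit (D : Set A))
    (n : A) (hn : IsNormalizer D n)
    (αn : PartialHomeomorph (characterSpace ℂ D) (characterSpace ℂ D))
    (hαn : IsWeylHomeo D n αn) :
    IsNormalizer D (star n) ∧
    ∀ αs : PartialHomeomorph (characterSpace ℂ D) (characterSpace ℂ D),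
      IsWeylHomeo D (star n) αs → Set.EqOn ⇑αs ⇑αn.symm αs.source := by
  obtain ⟨hsrc, htgt, hid⟩ := hαn
  constructor
  · intro d hd
    obtain ⟨h1, h2⟩ := hn d hd
    rw [star_star]
    exact ⟨h2, h1⟩
  · rintro αs ⟨hsrc_s, htgt_s, hids⟩ φ hφ
    -- φ ∈ supp°(n n*)
    have hφne : evalD D φ (n * star n) ≠ 0 := by
      have := hsrc_s ▸ hφ
      simpa [suppo, star_star] using this
    have hnn : n * star n ∈ D := by
      by_contra h
      exact hφne (dif_neg h)
    have hφt : φ ∈ αn.target := by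
      rw [htgt]; exact hφne
    set ψ := αn.symm φ with hψdef
    have hψ : ψ ∈ αn.source := αn.map_target hφt
    have hαψ : αn ψ = φ := αn.right_inv hφt
    have hψne : evalD D ψ (star n * n) ≠ 0 := by
      have := hsrc ▸ hψ
      simpa [suppo] using this
    have hnsn : star n * n ∈ D := by
      by_contra h
      exact hψne (dif_neg h)
    -- Step A : φ(n n*) = ψ(n* n)
    have stepA : evalD D φ (n * star n) = evalD D ψ (star n * n) := by
      have h1 := hid ψ hψ (n * star n) hnn
      rw [hαψ] at h1
      have hassoc : star n * (n * star n) * n = (star n * n) * (star n * n) := by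
        simp [mul_assoc]
      rw [hassoc, evalD_mul' D ψ hnsn hnsn] at h1
      exact mul_left_cancel₀ hψne h1
    -- Step B : for d ∈ D, φ(n d n*) = ψ(d) · ψ(n* n)
    have stepB : ∀ d ∈ D, evalD D φ (n * d * star n) =
        evalD D ψ d * evalD D ψ (star n * n) := by
      intro d hd
      have h1 := hid ψ hψ (n * d * star n) (hn d hd).1
      rw [hαψ] at h1
      have hassoc : star n * (n * d * star n) * n = (star n * n) * (d * (star n * n)) := by
        simp [mul_assoc]
      rw [hassoc, evalD_mul' D ψ hnsn (mul_mem hd hnsn), evalD_mul' D ψ hd hnsn] at h1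
      exact mul_left_cancel₀ hψne h1
    -- Step C : αs φ and ψ agree on D
    have key : ∀ d ∈ D, evalD D (αs φ) d = evalD D ψ d := by
      intro d hd
      have h1 := hids φ hφ d hd
      rw [star_star] at h1
      rw [stepB d hd] at h1
      have h3 : evalD D ψ d * evalD D ψ (star n * n) =
          evalD D φ (n * star n) * evalD D ψ d := by rw [stepA]; ring
      exact mul_left_cancel₀ hφne (h1.trans h3)
    exact char_ext' D (αs φ) ψ key
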